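/- arXiv:1910.02182 — 2 statements merged into one kernel-verified Lean document; each statement's English description precedes it below -/
import Mathlib

section
/- Let X be a finite type and let k ≥ 1 be a natural number. Let I and J be finite index sets. Let θ : I → ℝ be nonnegative weights summing to 1, and for each i ∈ I let p_i : X → ℝ be a probability mass function on X; define the mixture p_n by p_n(x) = ∑_{i∈I} θ_i · p_i(x). For each j ∈ J let δ_j : X → ℝ take only the values 0 and 1, and assume determinism: for every x ∈ X at most one j ∈ J has δ_j(x) = 1. For each j ∈ J let g_j : X → ℝ and φ_j ∈ ℝ, and define g_m(x) = ∑_{j∈J} δ_j(x) · (g_j(x) + φ_j). Then the k-th moment of g_m under p_n decomposes as: ∑_{x∈X} p_n(x) · (g_m(x))^k = ∑_{i∈I} θ_i · ∑_{j∈J} ∑_{l=0}^{k} binom(k,l) · φ_j^{k−l} · ( ∑_{x∈X} p_i(x) · δ_j(x) · (g_j(x))^l ), where (g_j(x))^0 is interpreted as 1, so that the l = 0 term equals binom(k,0) · φ_j^k · ∑_x p_i(x) · δ_j(x). -/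
/-- Proposition 3: recursive decomposition of the k-th moment of a deterministic OR gate
of a regression circuit w.r.t. an OR (mixture) gate of a probabilistic circuit. -/
theorem moment_or_gate_decomposition
    {X I J : Type*} [Fintype X] [Fintype I] [Fintype J]
    (k : ℕ) (hk : 1 ≤ k)
    (θ : I → ℝ) (hθ0 : ∀ i, 0 ≤ θ i) (hθ1 : ∑ i, θ i = 1)
    (p : I → X → ℝ) (hp0 : ∀ i x, 0 ≤ p i x) (hp1 : ∀ i, ∑ x, p i x = 1)
    (δ : J → X → ℝ) (hδ : ∀ j x, δ j x = 0 ∨ δ j x = 1)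
    (hdet : ∀ x : X, ∀ j j' : J, δ j x = 1 → δ j' x = 1 → j = j')
    (g : J → X → ℝ) (φ : J → ℝ) :
    ∑ x, (∑ i, θ i * p i x) * (∑ j, δ j x * (g j x + φ j)) ^ k =
      ∑ i, θ i * ∑ j, ∑ l ∈ Finset.range (k + 1),
        (k.choose l : ℝ) * φ j ^ (k - l) * ∑ x, p i x * δ j x * g j x ^ l := by
  have key : ∀ x : X, (∑ j, δ j x * (g j x + φ j)) ^ k =
      ∑ j, ∑ l ∈ Finset.range (k + 1),
        (k.choose l : ℝ) * φ j ^ (k - l) * (δ j x * g j x ^ l) := by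
    intro x
    by_cases h : ∃ j₀, δ j₀ x = 1
    · obtain ⟨j₀, hj₀⟩ := h
      have hz : ∀ j, j ≠ j₀ → δ j x = 0 := by
        intro j hj
        rcases hδ j x with h0 | h1
        · exact h0
        · exact absurd (hdet x j j₀ h1 hj₀) hj
      have h1 : (∑ j, δ j x * (g j x + φ j)) = g j₀ x + φ j₀ := by
        rw [Finset.sum_eq_single j₀]
        · rw [hj₀, one_mul]
        · intro j _ hj; rw [hz j hj, zero_mul]
        · intro hmem; exact absurd (Finset.mem_univ j₀) hmem
      have h2 : (∑ j, ∑ l ∈ Finset.range (k + 1),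
          (k.choose l : ℝ) * φ j ^ (k - l) * (δ j x * g j x ^ l)) =
          ∑ l ∈ Finset.range (k + 1),
            (k.choose l : ℝ) * φ j₀ ^ (k - l) * g j₀ x ^ l := by
        rw [Finset.sum_eq_single j₀]
        · simp [hj₀]
        · intro j _ hj
          apply Finset.sum_eq_zero
          intro l _
          rw [hz j hj, zero_mul, mul_zero]
        · intro hmem; exact absurd (Finset.mem_univ j₀) hmem
      rw [h1, h2, add_pow]
      apply Finset.sum_congr rfl
      intro l _
      ring
    · push_neg at h
      have hz : ∀ j, δ j x = 0 := fun j => (hδ j x).resolve_right (h j)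
      have h1 : (∑ j, δ j x * (g j x + φ j)) = 0 := by
        apply Finset.sum_eq_zero; intro j _; rw [hz j, zero_mul]
      rw [h1, zero_pow (by omega)]
      symm
      apply Finset.sum_eq_zero
      intro j _
      apply Finset.sum_eq_zero
      intro l _
      rw [hz j, zero_mul, mul_zero]
  calc ∑ x, (∑ i, θ i * p i x) * (∑ j, δ j x * (g j x + φ j)) ^ k
      = ∑ x, ∑ i, θ i * (p i x * (∑ j, ∑ l ∈ Finset.range (k + 1),
          (k.choose l : ℝ) * φ j ^ (k - l) * (δ j x * g j x ^ l))) := by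
        apply Finset.sum_congr rfl
        intro x _
        rw [key x, Finset.sum_mul]
        apply Finset.sum_congr rfl
        intro i _
        ring
    _ = ∑ i, θ i * ∑ j, ∑ l ∈ Finset.range (k + 1),
        (k.choose l : ℝ) * φ j ^ (k - l) * ∑ x, p i x * δ j x * g j x ^ l := by
        rw [Finset.sum_comm]
        apply Finset.sum_congr rfl
        intro i _
        rw [← Finset.mul_sum]
        congr 1
        simp_rw [Finset.mul_sum]
        rw [Finset.sum_comm]
        apply Finset.sum_congr rfl
        intro j _
        rw [Finset.sum_comm]
        apply Finset.sum_congr rfl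
        intro l _
        apply Finset.sum_congr rfl
        intro x _
        ring
end

section
/- Let n be a natural number and m a natural number with m ≥ 1, and let F be a decidable predicate on assignments x : Fin n → Bool. On the set Y of assignments y : Fin n → Fin m → Bool, define p(y) = 2^{−n} if for every i ∈ Fin n and all j, j' ∈ Fin m one has y i j = y i j', and p(y) = 0 otherwise. Then: (a) p is a probability mass function on Y, i.e., ∑_{y∈Y} p(y) = 1; and (b) ∑_{y∈Y} p(y) · (if F (fun i => y i 0) then 1 else 0) = (card { x : Fin n → Bool | F(x) }) / 2^n; that is, the expectation of the 0/1 indicator of the copied formula under the uniform distribution over copy-consistent assignments equals the model count of F divided by 2^n. -/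
lemma copy_sum_aux (n m : ℕ) (hm : 1 ≤ m) (g : (Fin n → Fin m → Bool) → ℝ) :
    ∑ y : Fin n → Fin m → Bool,
      (if ∀ (i : Fin n) (j j' : Fin m), y i j = y i j' then g y else 0)
      = ∑ x : Fin n → Bool, g (fun i _ => x i) := by
  rw [← Finset.sum_filter]
  refine Finset.sum_nbij' (fun y => fun i => y i ⟨0, hm⟩) (fun x => fun i _ => x i)
    ?_ ?_ ?_ ?_ ?_
  · intro y hy; simp
  · intro x hx; simp
  · intro y hy
    simp only [Finset.mem_filter, Finset.mem_univ, true_and] at hy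
    funext i j; exact hy i ⟨0, hm⟩ j
  · intro x hx; rfl
  · intro y hy
    simp only [Finset.mem_filter, Finset.mem_univ, true_and] at hy
    congr 1; funext i j; exact hy i j ⟨0, hm⟩

/-- The uniform distribution over copy-consistent assignments is a probability mass
function, and the expectation of the indicator of the copied formula under it equals
the model count of the original formula divided by 2^n (Theorem 2 reduction). -/
theorem uniform_copy_consistent_expectation
    (n m : ℕ) (hm : 1 ≤ m) (F : (Fin n → Bool) → Prop) [DecidablePred F]
    (p : (Fin n → Fin m → Bool) → ℝ)
    (hp : ∀ y, p y =
      if ∀ (i : Fin n) (j j' : Fin m), y i j = y i j' then (1 : ℝ) / 2 ^ n else 0) :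
    (∀ y, 0 ≤ p y) ∧ (∑ y, p y = 1) ∧
      (∑ y, p y * (if F (fun i => y i ⟨0, hm⟩) then (1 : ℝ) else 0) =
        (Fintype.card {x : Fin n → Bool // F x} : ℝ) / 2 ^ n) := by
  refine ⟨?_, ?_, ?_⟩
  · intro y; rw [hp y]; positivity
  · have := copy_sum_aux n m hm (fun _ => (1 : ℝ) / 2 ^ n)
    simp only [hp]
    rw [this]
    simp [Finset.sum_const, Fintype.card_fun]
  · have := copy_sum_aux n m hm
      (fun y => (1 / 2 ^ n : ℝ) * (if F (fun i => y i ⟨0, hm⟩) then (1 : ℝ) else 0))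
    have h1 : ∀ y : Fin n → Fin m → Bool,
        p y * (if F (fun i => y i ⟨0, hm⟩) then (1 : ℝ) else 0)
        = if ∀ (i : Fin n) (j j' : Fin m), y i j = y i j' then
            (1 / 2 ^ n : ℝ) * (if F (fun i => y i ⟨0, hm⟩) then (1 : ℝ) else 0)
          else 0 := by
      intro y; rw [hp y]; split <;> simp
    simp only [h1]
    rw [this]
    rw [← Finset.mul_sum, Finset.sum_boole, Fintype.card_subtype]
    ring
end
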